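/- Let K ≥ 3, let p ∈ (0,1)^K be a probability vector with p_y = max_k p_k, let j ≠ y, and let D with 0 < D ≤ 1 − p_y. Let (d_k)_{k ≠ j, k ≠ y} be nonnegative reals with d_k ≤ p_k for all such k and Σ_{k ≠ j, y} d_k = D, and suppose p_y + D ≤ 1. Then Σ_{k=1}^K log p_k > log(p_y + D) + log p_j + Σ_{k ≠ j, y} log(p_k − d_k), provided all logarithm arguments are positive (in particular p_k − d_k > 0). -/

import Mathlib

open Finset

theorem log_sum_key_inequality {K : ℕ} (hK : 3 ≤ K) (p : Fin K → ℝ)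
    (hp : ∀ k, 0 < p k ∧ p k < 1) (hsum : ∑ k, p k = 1)
    (y j : Fin K) (hjy : j ≠ y) (hmax : ∀ k, p k ≤ p y)
    (D : ℝ) (hD : 0 < D) (hD1 : D ≤ 1 - p y) (hD2 : p y + D ≤ 1)
    (d : Fin K → ℝ)
    (hd0 : ∀ k ∈ Finset.univ \ {j, y}, 0 ≤ d k)
    (hdk : ∀ k ∈ Finset.univ \ {j, y}, d k < p k)
    (hdsum : ∑ k ∈ Finset.univ \ {j, y}, d k = D) :
    Real.log (p y + D) + Real.log (p j) + ∑ k ∈ Finset.univ \ {j, y}, Real.log (p k - d k)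
      < ∑ k, Real.log (p k) := by
  have hpy : 0 < p y := (hp y).1
  have hsplit : ∑ k, Real.log (p k)
      = ∑ k ∈ Finset.univ \ {j, y}, Real.log (p k) + (Real.log (p j) + Real.log (p y)) := by
    rw [← Finset.sum_sdiff (Finset.subset_univ ({j, y} : Finset (Fin K))),
      Finset.sum_pair hjy]
  rw [hsplit]
  have h1 : Real.log (p y + D) - Real.log (p y) < D / p y := by
    have hx : (0:ℝ) < (p y + D) / p y := by positivity
    have hne : (p y + D) / p y ≠ 1 := by
      intro h
      have : p y + D = p y := by field_simp at h; linarith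
      linarith
    have := Real.log_lt_sub_one_of_pos hx hne
    rw [Real.log_div (by linarith) (ne_of_gt hpy)] at this
    have : Real.log (p y + D) - Real.log (p y) < (p y + D) / p y - 1 := this
    calc Real.log (p y + D) - Real.log (p y) < (p y + D) / p y - 1 := this
      _ = D / p y := by field_simp; ring
  have h2 : ∀ k ∈ Finset.univ \ {j, y},
      d k / p y ≤ Real.log (p k) - Real.log (p k - d k) := by
    intro k hk
    have hpk : 0 < p k := (hp k).1
    have hdknn := hd0 k hk
    have hdlt := hdk k hk
    have hpos : 0 < p k - d k := by linarith
    have hx : (0:ℝ) < (p k - d k) / p k := by positivity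
    have := Real.log_le_sub_one_of_pos hx
    rw [Real.log_div (ne_of_gt hpos) (ne_of_gt hpk)] at this
    have heq : (p k - d k) / p k - 1 = - (d k / p k) := by field_simp; ring
    have hstep : d k / p k ≤ Real.log (p k) - Real.log (p k - d k) := by linarith
    have hdiv : d k / p y ≤ d k / p k := by
      apply div_le_div_of_nonneg_left hdknn hpk (hmax k)
    linarith
  have h3 : D / p y ≤ ∑ k ∈ Finset.univ \ {j, y},
      (Real.log (p k) - Real.log (p k - d k)) := by
    calc D / p y = ∑ k ∈ Finset.univ \ {j, y}, d k / p y := by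
          rw [← Finset.sum_div, hdsum]
      _ ≤ _ := Finset.sum_le_sum h2
  have h4 : ∑ k ∈ Finset.univ \ {j, y}, (Real.log (p k) - Real.log (p k - d k))
      = ∑ k ∈ Finset.univ \ {j, y}, Real.log (p k)
        - ∑ k ∈ Finset.univ \ {j, y}, Real.log (p k - d k) := Finset.sum_sub_distrib _ _
  linarith
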